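/- Let γ : [a,b] → ℝ^N be an injective continuous curve of finite total curvature κ(a,b) on (a,b). Then for all a ≤ x < y ≤ b, the angle between the chord direction T_{xy} = (γ(y)−γ(x))/‖γ(y)−γ(x)‖ and the overall chord direction T_{ab} = (γ(b)−γ(a))/‖γ(b)−γ(a)‖ is at most 2·κ(a,b). -/

import Mathlib

open Set Filter


/-- Sum of exterior angles of the inscribed polygon with vertices `γ (t 0), …, γ (t (n+1))`,
the angles being taken at the `n` interior vertices. -/
noncomputable def polySum {E : Type*} [NormedAddCommGroup E] [InnerProductSpace ℝ E]
    (γ : ℝ → E) {n : ℕ} (t : Fin (n + 2) → ℝ) : ℝ :=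
  ∑ i : Fin n, InnerProductGeometry.angle
    (γ (t i.castSucc.succ) - γ (t i.castSucc.castSucc))
    (γ (t i.succ.succ) - γ (t i.castSucc.succ))

/-- The set of angle–sums of polygons inscribed in `γ` with vertices in `s`. -/
def polySums {E : Type*} [NormedAddCommGroup E] [InnerProductSpace ℝ E]
    (γ : ℝ → E) (s : Set ℝ) : Set ℝ :=
  {A | ∃ (n : ℕ) (t : Fin (n + 2) → ℝ), StrictMono t ∧ (∀ i, t i ∈ s) ∧ A = polySum γ t}

/-- Total curvature of `γ` on the parameter set `s` : the supremum of the angle sums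
of inscribed polygons with vertices in `s`. -/
noncomputable def totalCurvatureOn {E : Type*} [NormedAddCommGroup E] [InnerProductSpace ℝ E]
    (γ : ℝ → E) (s : Set ℝ) : ℝ :=
  sSup (polySums γ s)

/-- Cyclic angle sum for a closed (period-one) curve: vertices `γ (t 0), …, γ (t n)` within one
period, the chords taken cyclically (`Fin (n+1)` addition wraps around). -/
noncomputable def closedPolySum {E : Type*} [NormedAddCommGroup E] [InnerProductSpace ℝ E]
    (γ : ℝ → E) {n : ℕ} (t : Fin (n + 1) → ℝ) : ℝ :=
  ∑ i : Fin (n + 1), InnerProductGeometry.angle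
    (γ (t (i + 1)) - γ (t i)) (γ (t (i + 1 + 1)) - γ (t (i + 1)))

/-- Angle sums of closed polygons inscribed in a period-one closed curve `γ`. -/
def closedPolySums {E : Type*} [NormedAddCommGroup E] [InnerProductSpace ℝ E]
    (γ : ℝ → E) : Set ℝ :=
  {A | ∃ (n : ℕ) (t : Fin (n + 1) → ℝ), StrictMono t ∧ t (Fin.last n) < t 0 + 1 ∧
    A = closedPolySum γ t}

/-- Total curvature of a closed (period-one) curve. -/
noncomputable def closedTotalCurvature {E : Type*} [NormedAddCommGroup E]
    [InnerProductSpace ℝ E] (γ : ℝ → E) : ℝ :=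
  sSup (closedPolySums γ)


section Aux
open InnerProductGeometry
variable {E : Type*} [NormedAddCommGroup E] [InnerProductSpace ℝ E]

lemma mem_polySums_single' (γ : ℝ → E) (s : Set ℝ) {t0 t1 t2 : ℝ}
    (h0 : t0 ∈ s) (h1 : t1 ∈ s) (h2 : t2 ∈ s) (h01 : t0 < t1) (h12 : t1 < t2) :
    InnerProductGeometry.angle (γ t1 - γ t0) (γ t2 - γ t1) ∈ polySums γ s := by
  refine ⟨1, ![t0, t1, t2], ?_, ?_, ?_⟩
  · rw [Fin.strictMono_iff_lt_succ]
    intro i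
    fin_cases i <;> simpa
  · intro i; fin_cases i <;> simpa
  · simp [polySum, Fin.sum_univ_one]

lemma zero_mem_polySums' (γ : ℝ → E) (s : Set ℝ) {t0 t1 : ℝ}
    (h0 : t0 ∈ s) (h1 : t1 ∈ s) (h01 : t0 < t1) : (0:ℝ) ∈ polySums γ s := by
  refine ⟨0, ![t0, t1], ?_, ?_, ?_⟩
  · rw [Fin.strictMono_iff_lt_succ]
    intro i
    fin_cases i <;> simpa
  · intro i; fin_cases i <;> simpa
  · simp [polySum]

lemma key_angle' (κ : ℝ) (hκ0 : 0 ≤ κ) (hκ : κ < Real.pi/2)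
    (c1 v c3 : E) (hv : v ≠ 0) (hc1 : c1 ≠ 0) (hc3 : c3 ≠ 0) (hs : c1 + v + c3 ≠ 0)
    (h1 : angle c1 v ≤ κ) (h3 : angle c3 v ≤ κ) :
    angle (c1 + v + c3) v ≤ κ := by
  have hcos : 0 < Real.cos κ := Real.cos_pos_of_mem_Ioo ⟨by linarith [Real.pi_pos], hκ⟩
  have bound : ∀ c : E, c ≠ 0 → angle c v ≤ κ → ‖c‖ * ‖v‖ * Real.cos κ ≤ (inner ℝ c v : ℝ) := by
    intro c hc h
    have hcv : Real.cos (angle c v) = (inner ℝ c v : ℝ) / (‖c‖ * ‖v‖) := cos_angle c v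
    have h2 : Real.cos κ ≤ Real.cos (angle c v) :=
      Real.cos_le_cos_of_nonneg_of_le_pi (angle_nonneg c v) (by linarith [Real.pi_pos]) h
    have hn : 0 < ‖c‖ * ‖v‖ := mul_pos (norm_pos_iff.mpr hc) (norm_pos_iff.mpr hv)
    rw [hcv, le_div_iff₀ hn] at h2
    nlinarith [h2]
  have hvv : ‖v‖ * ‖v‖ * Real.cos κ ≤ (inner ℝ v v : ℝ) := by
    rw [real_inner_self_eq_norm_mul_norm]
    nlinarith [Real.cos_le_one κ, norm_nonneg v]
  have hb1 := bound c1 hc1 h1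
  have hb3 := bound c3 hc3 h3
  have hsum : (‖c1‖ + ‖v‖ + ‖c3‖) * ‖v‖ * Real.cos κ ≤ (inner ℝ (c1 + v + c3) v : ℝ) := by
    rw [inner_add_left, inner_add_left]
    nlinarith
  have hnorm : ‖c1 + v + c3‖ ≤ ‖c1‖ + ‖v‖ + ‖c3‖ := norm_add₃_le
  have hfinal : ‖c1 + v + c3‖ * ‖v‖ * Real.cos κ ≤ (inner ℝ (c1 + v + c3) v : ℝ) := by
    have h0 : 0 ≤ ‖v‖ * Real.cos κ := mul_nonneg (norm_nonneg v) hcos.le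
    calc ‖c1 + v + c3‖ * ‖v‖ * Real.cos κ
        = ‖c1 + v + c3‖ * (‖v‖ * Real.cos κ) := by ring
      _ ≤ (‖c1‖ + ‖v‖ + ‖c3‖) * (‖v‖ * Real.cos κ) := mul_le_mul_of_nonneg_right hnorm h0
      _ = (‖c1‖ + ‖v‖ + ‖c3‖) * ‖v‖ * Real.cos κ := by ring
      _ ≤ _ := hsum
  by_contra hcon
  push_neg at hcon
  have hlt : Real.cos (angle (c1 + v + c3) v) < Real.cos κ :=
    Real.cos_lt_cos_of_nonneg_of_le_pi hκ0 (angle_le_pi _ _) hcon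
  rw [cos_angle] at hlt
  have hn : 0 < ‖c1 + v + c3‖ * ‖v‖ := mul_pos (norm_pos_iff.mpr hs) (norm_pos_iff.mpr hv)
  rw [div_lt_iff₀ hn] at hlt
  nlinarith

end Aux

set_option maxHeartbeats 1000000 in
/-- If `γ : [a,b] → ℝ^N` is an injective continuous curve of finite total curvature
`κ(a,b)` on `(a,b)`, then for all `a ≤ x < y ≤ b` the angle between the chord direction
`T_{xy} = (γ y - γ x)/‖γ y - γ x‖` and the overall chord direction
`T_{ab} = (γ b - γ a)/‖γ b - γ a‖` is at most `2 · κ(a,b)`.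
(The angle between nonzero vectors is unchanged by normalization.) -/
theorem angle_chord_overall_le_two_totalCurvature {N : ℕ} (a b : ℝ) (hab : a < b)
    (γ : ℝ → EuclideanSpace ℝ (Fin N))
    (hcont : ContinuousOn γ (Set.Icc a b))
    (hinj : Set.InjOn γ (Set.Icc a b))
    (hfin : BddAbove (polySums γ (Set.Ioo a b)))
    (x y : ℝ) (hx : a ≤ x) (hxy : x < y) (hy : y ≤ b) :
    InnerProductGeometry.angle (γ y - γ x) (γ b - γ a) ≤
      2 * totalCurvatureOn γ (Set.Ioo a b) := by
  set κ := totalCurvatureOn γ (Set.Ioo a b) with hκdef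
  have hm1 : a + (b-a)/3 ∈ Set.Ioo a b := ⟨by linarith, by linarith⟩
  have hm2 : a + 2*(b-a)/3 ∈ Set.Ioo a b := ⟨by linarith, by linarith⟩
  have hκ0 : 0 ≤ κ := le_csSup hfin (zero_mem_polySums' γ _ hm1 hm2 (by linarith))
  have hchord : ∀ t0 t1 t2 : ℝ, t0 ∈ Set.Ioo a b → t1 ∈ Set.Ioo a b → t2 ∈ Set.Ioo a b →
      t0 < t1 → t1 < t2 →
      InnerProductGeometry.angle (γ t1 - γ t0) (γ t2 - γ t1) ≤ κ :=
    fun t0 t1 t2 h0 h1 h2 h01 h12 => le_csSup hfin (mem_polySums_single' γ _ h0 h1 h2 h01 h12)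
  rcases le_or_gt (Real.pi/2) κ with hcase | hcase
  · linarith [InnerProductGeometry.angle_le_pi (γ y - γ x) (γ b - γ a)]
  have hne : ∀ s t : ℝ, s ∈ Set.Icc a b → t ∈ Set.Icc a b → s ≠ t → γ t - γ s ≠ 0 := by
    intro s t hs ht hst
    rw [sub_ne_zero]
    exact fun h => hst (hinj ht hs h).symm
  set u : ℕ → ℝ := fun n => 1 / (n + 1 : ℝ) with hu
  have hupos : ∀ n, 0 < u n := fun n => by positivity
  have hulim : Tendsto u atTop (nhds 0) := tendsto_one_div_add_atTop_nhds_zero_nat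
  set p : ℕ → ℝ := fun n => a + u n / 2 with hp
  set q : ℕ → ℝ := fun n => b - u n / 2 with hq
  set X : ℕ → ℝ := fun n => max x (a + u n) with hX
  set Y : ℕ → ℝ := fun n => min y (b - u n) with hY
  have hplim : Tendsto p atTop (nhds a) := by
    have h : Tendsto (fun n => a + u n / 2) atTop (nhds (a + 0/2)) :=
      tendsto_const_nhds.add (hulim.div_const 2)
    simpa using h
  have hqlim : Tendsto q atTop (nhds b) := by
    have h : Tendsto (fun n => b - u n / 2) atTop (nhds (b - 0/2)) :=
      tendsto_const_nhds.sub (hulim.div_const 2)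
    simpa using h
  have hXlim : Tendsto X atTop (nhds x) := by
    have h : Tendsto (fun n => max x (a + u n)) atTop (nhds (max x (a + 0))) :=
      tendsto_const_nhds.max (tendsto_const_nhds.add hulim)
    simpa [max_eq_left hx] using h
  have hYlim : Tendsto Y atTop (nhds y) := by
    have h : Tendsto (fun n => min y (b - u n)) atTop (nhds (min y (b - 0))) :=
      tendsto_const_nhds.min (tendsto_const_nhds.sub hulim)
    simpa [min_eq_left hy] using h
  have hev : ∀ᶠ n in atTop, X n < Y n := hXlim.eventually_lt hYlim hxy
  have hchain : ∀ᶠ n in atTop, a < p n ∧ p n < X n ∧ X n < Y n ∧ Y n < q n ∧ q n < b := by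
    filter_upwards [hev] with n hXY
    refine ⟨by show a < a + u n / 2; linarith [hupos n], ?_, hXY, ?_, ?_⟩
    · exact lt_of_lt_of_le (show a + u n / 2 < a + u n by linarith [hupos n]) (le_max_right _ _)
    · exact lt_of_le_of_lt (min_le_right _ _)
        (show b - u n < b - u n / 2 by linarith [hupos n])
    · show b - u n / 2 < b; linarith [hupos n]
  have hineq : ∀ᶠ n in atTop,
      InnerProductGeometry.angle (γ (Y n) - γ (X n)) (γ (q n) - γ (p n)) ≤ κ := by
    filter_upwards [hchain] with n hn
    obtain ⟨h1, h2, h3, h4, h5⟩ := hn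
    have hpI : p n ∈ Set.Icc a b := ⟨h1.le, by linarith⟩
    have hXI : X n ∈ Set.Icc a b := ⟨by linarith, by linarith⟩
    have hYI : Y n ∈ Set.Icc a b := ⟨by linarith, by linarith⟩
    have hqI : q n ∈ Set.Icc a b := ⟨by linarith, h5.le⟩
    have hpO : p n ∈ Set.Ioo a b := ⟨h1, by linarith⟩
    have hXO : X n ∈ Set.Ioo a b := ⟨by linarith, by linarith⟩
    have hYO : Y n ∈ Set.Ioo a b := ⟨by linarith, by linarith⟩
    have hqO : q n ∈ Set.Ioo a b := ⟨by linarith, h5⟩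
    have e1 : InnerProductGeometry.angle (γ (X n) - γ (p n)) (γ (Y n) - γ (X n)) ≤ κ :=
      hchord _ _ _ hpO hXO hYO h2 h3
    have e3 : InnerProductGeometry.angle (γ (Y n) - γ (X n)) (γ (q n) - γ (Y n)) ≤ κ :=
      hchord _ _ _ hXO hYO hqO h3 h4
    have hdec : γ (q n) - γ (p n)
        = (γ (X n) - γ (p n)) + (γ (Y n) - γ (X n)) + (γ (q n) - γ (Y n)) := by abel
    rw [InnerProductGeometry.angle_comm, hdec]
    exact key_angle' κ hκ0 hcase _ _ _
      (hne _ _ hXI hYI h3.ne) (hne _ _ hpI hXI h2.ne) (hne _ _ hYI hqI h4.ne)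
      (by rw [← hdec]; exact hne _ _ hpI hqI (by linarith)) e1
      (by rw [InnerProductGeometry.angle_comm]; exact e3)
  have hmems : ∀ᶠ n in atTop, p n ∈ Set.Icc a b ∧ X n ∈ Set.Icc a b ∧ Y n ∈ Set.Icc a b ∧
      q n ∈ Set.Icc a b := by
    filter_upwards [hchain] with n hn
    obtain ⟨h1, h2, h3, h4, h5⟩ := hn
    exact ⟨⟨h1.le, by linarith⟩, ⟨by linarith, by linarith⟩, ⟨by linarith, by linarith⟩,
      ⟨by linarith, h5.le⟩⟩
  have hγlim : ∀ (f : ℕ → ℝ) (c : ℝ), Tendsto f atTop (nhds c) → c ∈ Set.Icc a b →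
      (∀ᶠ n in atTop, f n ∈ Set.Icc a b) →
      Tendsto (fun n => γ (f n)) atTop (nhds (γ c)) := by
    intro f c hf hc hmem
    exact (hcont c hc).tendsto.comp (tendsto_nhdsWithin_iff.mpr ⟨hf, hmem⟩)
  have hγp : Tendsto (fun n => γ (p n)) atTop (nhds (γ a)) :=
    hγlim p a hplim ⟨le_refl a, hab.le⟩ (hmems.mono fun n h => h.1)
  have hγq : Tendsto (fun n => γ (q n)) atTop (nhds (γ b)) :=
    hγlim q b hqlim ⟨hab.le, le_refl b⟩ (hmems.mono fun n h => h.2.2.2)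
  have hγX : Tendsto (fun n => γ (X n)) atTop (nhds (γ x)) :=
    hγlim X x hXlim ⟨hx, le_trans hxy.le hy⟩ (hmems.mono fun n h => h.2.1)
  have hγY : Tendsto (fun n => γ (Y n)) atTop (nhds (γ y)) :=
    hγlim Y y hYlim ⟨le_trans hx hxy.le, hy⟩ (hmems.mono fun n h => h.2.2.1)
  have hne1 : γ y - γ x ≠ 0 :=
    hne x y ⟨hx, le_trans hxy.le hy⟩ ⟨le_trans hx hxy.le, hy⟩ hxy.ne
  have hne2 : γ b - γ a ≠ 0 := hne a b ⟨le_refl a, hab.le⟩ ⟨hab.le, le_refl b⟩ hab.ne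
  have hpair : Tendsto (fun n => (γ (Y n) - γ (X n), γ (q n) - γ (p n))) atTop
      (nhds (γ y - γ x, γ b - γ a)) := (hγY.sub hγX).prodMk_nhds (hγq.sub hγp)
  have hca : ContinuousAt
      (fun z : EuclideanSpace ℝ (Fin N) × EuclideanSpace ℝ (Fin N) =>
        InnerProductGeometry.angle z.1 z.2) (γ y - γ x, γ b - γ a) :=
    InnerProductGeometry.continuousAt_angle hne1 hne2
  have hT : Tendsto (fun n => InnerProductGeometry.angle (γ (Y n) - γ (X n))
      (γ (q n) - γ (p n))) atTop
      (nhds (InnerProductGeometry.angle (γ y - γ x) (γ b - γ a))) := by simpa only [Function.comp_def] using hca.tendsto.comp hpair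
  have : InnerProductGeometry.angle (γ y - γ x) (γ b - γ a) ≤ κ := le_of_tendsto hT hineq
  linarith
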